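/- Let κ₁, κ₂ > 0, ε > 0, a² = 2ε/(κ₁+κ₂) + O(ε²), p₁ = (−a,0), p₂ = (a,0), and f(x, y) = y/((x+a)² + y²) + y/((x−a)² + y²). If |x| ≤ C₀(ε + y²) and (x ± a)² + y² ≥ c(ε+y²), then f(x, y) = (κ₁+κ₂) y/(ε + (κ₁+κ₂)y²/2) + O(1), i.e. there is a constant C independent of ε with |f(x,y) − (κ₁+κ₂)y/(ε + (κ₁+κ₂)y²/2)| ≤ C for all such (x, y) with |y| ≤ L. -/

import Mathlib

open Real

lemma aux_div (num den E P c m : ℝ) (hc : 0 < c) (hm : 0 < m) (hP : 0 < P)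
    (hden : 2*c*m*P^2 ≤ den) (hnum : |num| ≤ E*P^2) : |num/den| ≤ E/(2*c*m) := by
  have hden0 : 0 < den := lt_of_lt_of_le (by positivity) hden
  rw [abs_div, abs_of_pos hden0]
  have h1 : |num|/den ≤ (E*P^2)/(2*c*m*P^2) :=
    div_le_div₀ (le_trans (abs_nonneg _) hnum) hnum (by positivity) hden
  have h2 : (E*P^2)/(2*c*m*P^2) = E/(2*c*m) := by
    field_simp
  linarith

set_option maxHeartbeats 1000000 in
theorem stmt19 (κ₁ κ₂ L C₀ C₄ c : ℝ)
    (hκ₁ : 0 < κ₁) (hκ₂ : 0 < κ₂) (hL : 0 < L) (hC₀ : 0 < C₀) (hc : 0 < c)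
    (hC₄ : 0 ≤ C₄)
    (a : ℝ → ℝ)
    (ha : ∀ ε : ℝ, 0 < ε → |(a ε) ^ 2 - 2 * ε / (κ₁ + κ₂)| ≤ C₄ * ε ^ 2) :
    ∃ C > (0:ℝ), ∀ ε : ℝ, 0 < ε → ∀ x y : ℝ,
      |x| ≤ C₀ * (ε + y ^ 2) →
      c * (ε + y ^ 2) ≤ (x + a ε) ^ 2 + y ^ 2 →
      c * (ε + y ^ 2) ≤ (x - a ε) ^ 2 + y ^ 2 →
      |y| ≤ L →
      |(y / ((x + a ε) ^ 2 + y ^ 2) + y / ((x - a ε) ^ 2 + y ^ 2))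
          - (κ₁ + κ₂) * y / (ε + (κ₁ + κ₂) * y ^ 2 / 2)| ≤ C := by
  set κ := κ₁ + κ₂ with hκdef
  have hκ : 0 < κ := by positivity
  set m : ℝ := min 1 (κ/2) with hmdef
  have hm : 0 < m := lt_min one_pos (by positivity)
  set M : ℝ := max 1 (2/κ + C₄) with hMdef
  have hM1 : (1:ℝ) ≤ M := le_max_left _ _
  have hMα : 2/κ + C₄ ≤ M := le_max_right _ _
  have hM0 : 0 < M := lt_of_lt_of_le one_pos hM1
  set K : ℝ := κ * (L*C₄ + C₀*M + L*C₀^2) with hKdef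
  have hK : 0 ≤ K := by positivity
  refine ⟨K/(c*m) + 2*L/c + κ*L + 1, by positivity, ?_⟩
  intro ε hε x y hx hA hB hy
  set b := a ε with hbdef
  have hy0 : 0 ≤ |y| := abs_nonneg y
  set P : ℝ := ε + y^2 with hPdef
  have hP : 0 < P := by positivity
  have hApos : 0 < (x + b)^2 + y^2 := lt_of_lt_of_le (by positivity) hA
  have hBpos : 0 < (x - b)^2 + y^2 := lt_of_lt_of_le (by positivity) hB
  have hDpos : 0 < ε + κ*y^2/2 := by positivity
  have hDlb : m * P ≤ ε + κ*y^2/2 := by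
    have h1 : m ≤ 1 := min_le_left _ _
    have h2 : m ≤ κ/2 := min_le_right _ _
    have e1 : m*ε ≤ 1*ε := mul_le_mul_of_nonneg_right h1 hε.le
    have e2 : m*y^2 ≤ (κ/2)*y^2 := mul_le_mul_of_nonneg_right h2 (sq_nonneg y)
    rw [hPdef]
    linarith
  have he : |b ^ 2 - 2 * ε / κ| ≤ C₄ * ε ^ 2 := ha ε hε
  clear_value κ m M K b P
  by_cases hε1 : ε ≤ 1
  · -- small ε: use cancellation
    -- b² ≤ M ε
    have hb2 : b^2 ≤ M*ε := by
      have h1 := (abs_le.mp he).2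
      have h2 : C₄*ε^2 ≤ C₄*ε := by linarith [mul_nonneg (mul_nonneg hC₄ hε.le) (by linarith : (0:ℝ) ≤ 1 - ε)]
      have h3 : (2/κ + C₄)*ε ≤ M*ε := mul_le_mul_of_nonneg_right hMα hε.le
      have h4 : 2*ε/κ = (2/κ)*ε := by ring
      linarith
    -- |x|² bound
    have hx2 : x^2 ≤ C₀^2*P^2 := by
      have := mul_self_le_mul_self (abs_nonneg x) hx
      rw [abs_mul_abs_self] at this
      linarith [this]
    have hεP : ε ≤ P := by rw [hPdef]; linarith [sq_nonneg y]
    have hε2 : ε^2 ≤ P^2 := by linarith [mul_self_le_mul_self hε.le hεP]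
    -- |b||y| bound
    have hby : |b| * |y| ≤ M/2*P := by
      have h1 : 2*(|b| * |y|) ≤ |b| ^ 2 + |y| ^ 2 := by linarith [sq_nonneg (|b| - |y|)]
      have h2 : |b| ^ 2 = b^2 := sq_abs b
      have h3 : |y| ^ 2 = y^2 := sq_abs y
      have h4 : M*ε + y^2 ≤ M*P := by
        rw [hPdef]
        linarith [mul_le_mul_of_nonneg_right hM1 (sq_nonneg y)]
      linarith
    -- key numerator bound, for u = x+b and u = x-b
    have hnum : ∀ u : ℝ, (u = x + b ∨ u = x - b) → |y*(2*ε - κ*u^2)| ≤ K*P^2 := by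
      intro u hu
      have hkb : |κ*b^2 - 2*ε| ≤ κ*(C₄*ε^2) := by
        have h1 : κ*b^2 - 2*ε = κ*(b^2 - 2*ε/κ) := by field_simp
        rw [h1, abs_mul, abs_of_pos hκ]
        exact mul_le_mul_of_nonneg_left he hκ.le
      have hkb1 := (abs_le.mp hkb).1
      have hkb2 := (abs_le.mp hkb).2
      have hbx1 : b*x ≤ |b| * |x| := by rw [← abs_mul]; exact le_abs_self _
      have hbx2 : -(|b| * |x|) ≤ b*x := by rw [← abs_mul]; exact neg_abs_le _
      have h5 : κ*(b*x) ≤ κ*(|b| * |x|) := mul_le_mul_of_nonneg_left hbx1 hκ.le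
      have h6 : κ*(-(|b| * |x|)) ≤ κ*(b*x) := mul_le_mul_of_nonneg_left hbx2 hκ.le
      have habs : |2*ε - κ*u^2| ≤ κ*(C₄*ε^2) + κ*x^2 + 2*κ*(|b| * |x|) := by
        rcases hu with h | h <;> subst h
        · have hexp : 2*ε - κ*(x+b)^2 = (2*ε - κ*b^2) - κ*x^2 - 2*(κ*(b*x)) := by ring
          rw [hexp]
          refine abs_le.mpr ⟨by linarith [mul_nonneg hκ.le (sq_nonneg x)], by linarith [mul_nonneg hκ.le (sq_nonneg x)]⟩
        · have hexp : 2*ε - κ*(x-b)^2 = (2*ε - κ*b^2) - κ*x^2 + 2*(κ*(b*x)) := by ring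
          rw [hexp]
          refine abs_le.mpr ⟨by linarith [mul_nonneg hκ.le (sq_nonneg x)], by linarith [mul_nonneg hκ.le (sq_nonneg x)]⟩
      rw [abs_mul]
      have step : |y| * (κ*(C₄*ε^2) + κ*x^2 + 2*κ*(|b| * |x|)) ≤ K*P^2 := by
        have m1 : |y| * ε^2 ≤ L*P^2 := mul_le_mul hy hε2 (sq_nonneg ε) hL.le
        have t1 : κ*C₄*(|y| * ε^2) ≤ κ*C₄*(L*P^2) :=
          mul_le_mul_of_nonneg_left m1 (mul_nonneg hκ.le hC₄)
        have m2 : |y| * x^2 ≤ L*(C₀^2*P^2) := mul_le_mul hy hx2 (sq_nonneg x) hL.le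
        have t2 : κ*(|y| * x^2) ≤ κ*(L*(C₀^2*P^2)) := mul_le_mul_of_nonneg_left m2 hκ.le
        have m3 : |x| * (|b| * |y|) ≤ (C₀*P)*(M/2*P) :=
          mul_le_mul hx hby (mul_nonneg (abs_nonneg b) hy0) (by positivity)
        have t3 : 2*κ*(|x| * (|b| * |y|)) ≤ 2*κ*((C₀*P)*(M/2*P)) :=
          mul_le_mul_of_nonneg_left m3 (by positivity)
        rw [hKdef]
        linarith [t1, t2, t3]
      calc |y| * |2*ε - κ*u^2| ≤ |y| * (κ*(C₄*ε^2) + κ*x^2 + 2*κ*(|b| * |x|)) :=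
            mul_le_mul_of_nonneg_left habs hy0
        _ ≤ K*P^2 := step
    -- split into two fractions
    have hid : y / ((x + b) ^ 2 + y ^ 2) + y / ((x - b) ^ 2 + y ^ 2)
          - κ * y / (ε + κ * y ^ 2 / 2)
        = (y*(2*ε - κ*(x+b)^2)) / (2*((x+b)^2+y^2)*(ε + κ*y^2/2))
          + (y*(2*ε - κ*(x-b)^2)) / (2*((x-b)^2+y^2)*(ε + κ*y^2/2)) := by
      have hid1 : y / ((x + b) ^ 2 + y ^ 2) - κ*y/(2*(ε + κ*y^2/2))
          = (y*(2*ε - κ*(x+b)^2)) / (2*((x+b)^2+y^2)*(ε + κ*y^2/2)) := by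
        rw [div_sub_div _ _ hApos.ne' (by positivity), div_eq_div_iff (by positivity) (by positivity)]
        ring
      have hid2 : y / ((x - b) ^ 2 + y ^ 2) - κ*y/(2*(ε + κ*y^2/2))
          = (y*(2*ε - κ*(x-b)^2)) / (2*((x-b)^2+y^2)*(ε + κ*y^2/2)) := by
        rw [div_sub_div _ _ hBpos.ne' (by positivity), div_eq_div_iff (by positivity) (by positivity)]
        ring
      have hsp : κ * y / (ε + κ * y ^ 2 / 2) = κ*y/(2*(ε + κ*y^2/2)) + κ*y/(2*(ε + κ*y^2/2)) := by
        rw [← add_div, div_eq_div_iff hDpos.ne' (by positivity : (2:ℝ)*(ε + κ*y^2/2) ≠ 0)]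
        ring
      rw [hsp, ← hid1, ← hid2]
      ring
    have hden1 : 2*c*m*P^2 ≤ 2*((x+b)^2+y^2)*(ε + κ*y^2/2) := by
      have := mul_le_mul hA hDlb (by positivity) (le_trans (by positivity) hA)
      linarith [this]
    have hden2 : 2*c*m*P^2 ≤ 2*((x-b)^2+y^2)*(ε + κ*y^2/2) := by
      have := mul_le_mul hB hDlb (by positivity) (le_trans (by positivity) hB)
      linarith [this]
    have e1 := aux_div _ _ K P c m hc hm hP hden1 (hnum (x+b) (Or.inl rfl))
    have e2 := aux_div _ _ K P c m hc hm hP hden2 (hnum (x-b) (Or.inr rfl))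
    have hcm : 0 < c*m := by positivity
    have hfinal : K/(2*c*m) + K/(2*c*m) ≤ K/(c*m) + 2*L/c + κ*L + 1 := by
      have : K/(2*c*m) + K/(2*c*m) = K/(c*m) := by field_simp; ring
      rw [this]
      have : 0 ≤ 2*L/c := by positivity
      linarith [mul_pos hκ hL]
    calc |(y / ((x + b) ^ 2 + y ^ 2) + y / ((x - b) ^ 2 + y ^ 2))
          - κ * y / (ε + κ * y ^ 2 / 2)|
        ≤ |(y*(2*ε - κ*(x+b)^2)) / (2*((x+b)^2+y^2)*(ε + κ*y^2/2))|
          + |(y*(2*ε - κ*(x-b)^2)) / (2*((x-b)^2+y^2)*(ε + κ*y^2/2))| := by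
          rw [hid]; exact abs_add_le _ _
      _ ≤ K/(2*c*m) + K/(2*c*m) := add_le_add e1 e2
      _ ≤ K/(c*m) + 2*L/c + κ*L + 1 := hfinal
  · -- large ε: crude bounds
    push_neg at hε1
    have hP1 : (1:ℝ) ≤ P := by rw [hPdef]; linarith [sq_nonneg y]
    have hcP : c ≤ c*P := by linarith [mul_le_mul_of_nonneg_left hP1 hc.le]
    have hcA : c ≤ (x+b)^2 + y^2 := le_trans hcP hA
    have hcB : c ≤ (x-b)^2 + y^2 := le_trans hcP hB
    have h1 : |y / ((x + b) ^ 2 + y ^ 2)| ≤ L/c := by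
      rw [abs_div, abs_of_pos hApos]
      exact div_le_div₀ hL.le hy (by positivity) hcA
    have h2 : |y / ((x - b) ^ 2 + y ^ 2)| ≤ L/c := by
      rw [abs_div, abs_of_pos hBpos]
      exact div_le_div₀ hL.le hy (by positivity) hcB
    have h3 : |κ * y / (ε + κ * y ^ 2 / 2)| ≤ κ*L := by
      rw [abs_div, abs_of_pos hDpos, abs_mul, abs_of_pos hκ]
      have hD1 : (1:ℝ) ≤ ε + κ*y^2/2 := by linarith [mul_nonneg hκ.le (sq_nonneg y)]
      calc κ*|y| / (ε + κ*y^2/2) ≤ (κ*L)/1 :=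
            div_le_div₀ (by positivity) (mul_le_mul_of_nonneg_left hy hκ.le) one_pos hD1
        _ = κ*L := by ring
    have hKnn : 0 ≤ K/(c*m) := by positivity
    calc |(y / ((x + b) ^ 2 + y ^ 2) + y / ((x - b) ^ 2 + y ^ 2))
          - κ * y / (ε + κ * y ^ 2 / 2)|
        ≤ |y / ((x + b) ^ 2 + y ^ 2)| + |y / ((x - b) ^ 2 + y ^ 2)|
          + |κ * y / (ε + κ * y ^ 2 / 2)| := by
          have := abs_sub (y / ((x + b) ^ 2 + y ^ 2) + y / ((x - b) ^ 2 + y ^ 2))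
            (κ * y / (ε + κ * y ^ 2 / 2))
          have h4 := abs_add_le (y / ((x + b) ^ 2 + y ^ 2)) (y / ((x - b) ^ 2 + y ^ 2))
          calc |(y / ((x + b) ^ 2 + y ^ 2) + y / ((x - b) ^ 2 + y ^ 2))
                - κ * y / (ε + κ * y ^ 2 / 2)|
              ≤ |y / ((x + b) ^ 2 + y ^ 2) + y / ((x - b) ^ 2 + y ^ 2)|
                + |κ * y / (ε + κ * y ^ 2 / 2)| := abs_sub _ _
            _ ≤ _ := by linarith
      _ ≤ L/c + L/c + κ*L := by linarith
      _ ≤ K/(c*m) + 2*L/c + κ*L + 1 := by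
          have : L/c + L/c = 2*L/c := by ring
          linarith
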